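/- Let L > 0 and let m : [1, ∞) → [0, 1] be a monotonically decreasing function with lim_{x→∞} x m(x) = L. Then lim_{n→∞} (1/(n log n)) ∫_1^∞ [(1 − m(x))^n − 1 + n m(x)] dx = L. -/

import Mathlib

open MeasureTheory Filter
open scoped Topology

lemma aux_low (u : ℝ) (hu : u ≤ 1) (n : ℕ) : 1 - n * u ≤ (1 - u) ^ n := by
  have := one_add_mul_le_pow (a := -u) (by linarith) n
  have h2 : (1 + -u) = 1 - u := by ring
  rw [h2] at this
  linarith

lemma aux_high (u : ℝ) (hu0 : 0 ≤ u) (hu1 : u ≤ 1) (n : ℕ) :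
    (1 - u) ^ n ≤ 1 - n * u + (n : ℝ) ^ 2 * u ^ 2 / 2 := by
  induction n with
  | zero => simp
  | succ n ih =>
    have h1 : (0 : ℝ) ≤ 1 - u := by linarith
    have h3 := mul_le_mul_of_nonneg_right ih h1
    rw [pow_succ]
    push_cast
    nlinarith [sq_nonneg u, sq_nonneg ((n:ℝ) * u),
      mul_nonneg (mul_nonneg (sq_nonneg (n:ℝ)) hu0) (mul_nonneg hu0 hu0)]

set_option maxHeartbeats 2000000 in
theorem stmt_11 (L : ℝ) (hL : 0 < L) (m : ℝ → ℝ)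
    (hm_range : ∀ x, 1 ≤ x → m x ∈ Set.Icc (0 : ℝ) 1)
    (hm_anti : AntitoneOn m (Set.Ici (1 : ℝ)))
    (hm_lim : Tendsto (fun x : ℝ => x * m x) atTop (𝓝 L)) :
    Tendsto (fun n : ℕ => (1 / ((n : ℝ) * Real.log n)) *
        ∫ x in Set.Ioi (1 : ℝ), ((1 - m x) ^ n - 1 + n * m x))
      atTop (𝓝 L) := by
  rw [Metric.tendsto_nhds]
  intro ε hε
  set f : ℕ → ℝ → ℝ := fun n x => (1 - m x) ^ n - 1 + n * m x with hf
  -- choose ε'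
  set ε' : ℝ := min (ε / 2) (L / 2) with hε'def
  have hε'pos : 0 < ε' := lt_min (by linarith) (by linarith)
  have hε'ε : ε' < ε := lt_of_le_of_lt (min_le_left _ _) (by linarith)
  have hε'L : ε' < L := lt_of_le_of_lt (min_le_right _ _) (by linarith)
  set k : ℝ := L - ε' with hkdef
  set K : ℝ := L + ε' with hKdef
  have hk : 0 < k := by simp [hkdef]; linarith
  have hK : 0 < K := by simp [hKdef]; linarith
  -- choose X
  obtain ⟨X₀, hX₀⟩ := (eventually_atTop.mp (hm_lim.eventually
    (Metric.closedBall_mem_nhds L hε'pos)))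
  set X : ℝ := max X₀ 2 with hXdef
  have hX2 : (2:ℝ) ≤ X := le_max_right _ _
  have hX1 : (1:ℝ) ≤ X := by linarith
  have hXpos : (0:ℝ) < X := by linarith
  have hmX : ∀ x : ℝ, X ≤ x → k / x ≤ m x ∧ m x ≤ K / x := by
    intro x hx
    have hxpos : 0 < x := lt_of_lt_of_le hXpos hx
    have := hX₀ x (le_trans (le_max_left _ _) hx)
    rw [Real.dist_eq, abs_le] at this
    constructor
    · rw [div_le_iff₀ hxpos]; simp [hkdef] at this ⊢; nlinarith [this.1]
    · rw [le_div_iff₀ hxpos]; nlinarith [this.2]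
  -- basic pointwise facts
  have hm0 : ∀ x : ℝ, 1 ≤ x → 0 ≤ m x := fun x hx => (hm_range x hx).1
  have hm1 : ∀ x : ℝ, 1 ≤ x → m x ≤ 1 := fun x hx => (hm_range x hx).2
  have hf0 : ∀ (n : ℕ) (x : ℝ), 1 ≤ x → 0 ≤ f n x := by
    intro n x hx
    have := aux_low (m x) (hm1 x hx) n
    simp only [hf]; linarith
  have hfli : ∀ (n : ℕ) (x : ℝ), 1 ≤ x → f n x ≤ n * m x := by
    intro n x hx
    have h1 : (1 - m x) ^ n ≤ 1 :=
      pow_le_one₀ (by linarith [hm1 x hx]) (by linarith [hm0 x hx])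
    simp only [hf]; linarith
  have hfsq : ∀ (n : ℕ) (x : ℝ), 1 ≤ x → f n x ≤ (n:ℝ)^2 * (m x)^2 / 2 := by
    intro n x hx
    have := aux_high (m x) (hm0 x hx) (hm1 x hx) n
    simp only [hf]; linarith
  -- measurability
  have hmm : AEMeasurable m (volume.restrict (Set.Ioi (1:ℝ))) :=
    aemeasurable_restrict_of_antitoneOn measurableSet_Ioi
      (hm_anti.mono Set.Ioi_subset_Ici_self)
  have hfm : ∀ n : ℕ, AEStronglyMeasurable (f n) (volume.restrict (Set.Ioi (1:ℝ))) := by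
    intro n
    exact ((((aemeasurable_const.sub hmm).pow_const n).sub aemeasurable_const).add
      (aemeasurable_const.mul hmm)).aestronglyMeasurable
  have hfms : ∀ (n : ℕ) (s : Set ℝ), s ⊆ Set.Ioi (1:ℝ) →
      AEStronglyMeasurable (f n) (volume.restrict s) := by
    intro n s hs
    exact (hfm n).mono_measure (Measure.restrict_mono hs le_rfl)
  have hrpow : ∀ x : ℝ, 0 < x → x ^ (-2:ℝ) = (x^2)⁻¹ := by
    intro x hx
    rw [show (-2:ℝ) = -((2:ℕ):ℝ) by norm_num, Real.rpow_neg hx.le, Real.rpow_natCast]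
  -- integrability
  have hIoc1X : Set.Ioc (1:ℝ) X ⊆ Set.Ioi 1 := Set.Ioc_subset_Ioi_self
  have hIoiX : Set.Ioi X ⊆ Set.Ioi 1 := Set.Ioi_subset_Ioi (by linarith)
  have hint : ∀ n : ℕ, IntegrableOn (f n) (Set.Ioi (1:ℝ)) := by
    intro n
    rw [← Set.Ioc_union_Ioi_eq_Ioi hX1]
    refine IntegrableOn.union ?_ ?_
    · refine Integrable.mono' (g := fun _ => (n:ℝ))
        (integrableOn_const measure_Ioc_lt_top.ne) (hfms n _ hIoc1X) ?_
      rw [ae_restrict_iff' measurableSet_Ioc]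
      refine ae_of_all _ (fun x hx => ?_)
      have hx1 : 1 ≤ x := hx.1.le
      rw [Real.norm_eq_abs, abs_of_nonneg (hf0 n x hx1)]
      calc f n x ≤ n * m x := hfli n x hx1
        _ ≤ n * 1 := by
            exact mul_le_mul_of_nonneg_left (hm1 x hx1) (Nat.cast_nonneg n)
        _ = n := mul_one _
    · refine Integrable.mono' (g := fun x => ((n:ℝ)^2 * K^2 / 2) * x ^ (-2:ℝ))
        ((integrableOn_Ioi_rpow_of_lt (by norm_num) hXpos).const_mul _)
        (hfms n _ hIoiX) ?_
      rw [ae_restrict_iff' measurableSet_Ioi]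
      refine ae_of_all _ (fun x hx => ?_)
      have hxX : X ≤ x := (Set.mem_Ioi.mp hx).le
      have hx1 : 1 ≤ x := by linarith
      have hxpos : 0 < x := by linarith
      have hmK := (hmX x hxX).2
      show ‖f n x‖ ≤ (n:ℝ)^2 * K^2 / 2 * x ^ (-2:ℝ)
      rw [Real.norm_eq_abs, abs_of_nonneg (hf0 n x hx1), hrpow x hxpos]
      have hm2 : (m x)^2 ≤ K^2 * (x^2)⁻¹ := by
        rw [pow_two]
        calc m x * m x ≤ (K / x) * (K / x) := mul_self_le_mul_self (hm0 x hx1) hmK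
          _ = K^2 * (x^2)⁻¹ := by field_simp
      calc f n x ≤ (n:ℝ)^2 * (m x)^2 / 2 := hfsq n x hx1
        _ ≤ (n:ℝ)^2 * (K^2 * (x^2)⁻¹) / 2 := by nlinarith [sq_nonneg (n:ℝ)]
        _ = (n:ℝ)^2 * K^2 / 2 * (x^2)⁻¹ := by ring
    -- explicit log integral
  have hlogint : ∀ (c : ℝ) (b : ℝ), X ≤ b →
      ∫ x in Set.Ioc X b, c * (1/x) = c * (Real.log b - Real.log X) := by
    intro c b hb
    have hbpos : 0 < b := lt_of_lt_of_le hXpos hb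
    have hii : IntervalIntegrable (fun x : ℝ => 1/x) volume X b :=
      intervalIntegral.intervalIntegrable_one_div (f := fun x => x)
        (fun x hx => by
          rw [Set.uIcc_of_le hb] at hx
          exact ne_of_gt (lt_of_lt_of_le hXpos hx.1)) continuousOn_id
    rw [← intervalIntegral.integral_of_le hb, intervalIntegral.integral_const_mul,
      integral_one_div_of_pos hXpos hbpos,
      Real.log_div (ne_of_gt hbpos) (ne_of_gt hXpos)]
  -- key quantitative bounds
  have key : ∀ n : ℕ, X + 1 ≤ (n:ℝ) →
      k * n * (Real.log n - Real.log X) - n ≤ (∫ x in Set.Ioi (1:ℝ), f n x) ∧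
      (∫ x in Set.Ioi (1:ℝ), f n x) ≤
        (X - 1) * n + K * n * (Real.log n - Real.log X) + n * K^2 / 2 := by
    intro n hn
    have hXn : X ≤ (n:ℝ) := by linarith
    have hnpos : (0:ℝ) < n := by linarith
    have hn1 : (1:ℝ) < n := by linarith
    have hsub2 : Set.Ioc X (n:ℝ) ⊆ Set.Ioi 1 := fun x hx => by
      simp only [Set.mem_Ioi]; have := hx.1; linarith
    have hsub3 : Set.Ioi (n:ℝ) ⊆ Set.Ioi 1 := Set.Ioi_subset_Ioi (by linarith)
    have int1 : IntegrableOn (f n) (Set.Ioc 1 X) := (hint n).mono_set hIoc1X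
    have int2 : IntegrableOn (f n) (Set.Ioc X (n:ℝ)) := (hint n).mono_set hsub2
    have int3 : IntegrableOn (f n) (Set.Ioi (n:ℝ)) := (hint n).mono_set hsub3
    have int23 : IntegrableOn (f n) (Set.Ioi X) := (hint n).mono_set hIoiX
    have hgcont : ∀ c : ℝ, IntegrableOn (fun x : ℝ => c * (1/x) - 1) (Set.Ioc X (n:ℝ)) := by
      intro c
      have : ContinuousOn (fun x : ℝ => c * (1/x) - 1) (Set.Icc X (n:ℝ)) := by
        refine ContinuousOn.sub (ContinuousOn.mul continuousOn_const ?_) continuousOn_const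
        exact continuousOn_const.div continuousOn_id
          (fun x hx => ne_of_gt (lt_of_lt_of_le hXpos hx.1))
      exact (this.integrableOn_Icc).mono_set Set.Ioc_subset_Icc_self
    have hgcont' : ∀ c : ℝ, IntegrableOn (fun x : ℝ => c * (1/x)) (Set.Ioc X (n:ℝ)) := by
      intro c
      have hc : ContinuousOn (fun x : ℝ => c * (1/x)) (Set.Icc X (n:ℝ)) :=
        continuousOn_const.mul (continuousOn_const.div continuousOn_id
          (fun x hx => ne_of_gt (lt_of_lt_of_le hXpos hx.1)))
      exact (hc.integrableOn_Icc).mono_set Set.Ioc_subset_Icc_self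
    constructor
    · -- lower bound
      have l1 : ∫ x in Set.Ioc X (n:ℝ), (k * n * (1/x) - 1) ≤ ∫ x in Set.Ioc X (n:ℝ), f n x := by
        refine setIntegral_mono_on (hgcont _) int2 measurableSet_Ioc ?_
        intro x hx
        have hxX : X ≤ x := hx.1.le
        have hx1 : 1 ≤ x := by linarith
        have hxpos : 0 < x := by linarith
        have hmk := (hmX x hxX).1
        have hpow : (0:ℝ) ≤ (1 - m x) ^ n := pow_nonneg (by linarith [hm1 x hx1]) n
        have : k * n * (1/x) ≤ n * m x := by
          rw [div_le_iff₀ hxpos] at hmk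
          calc k * n * (1/x) = (n:ℝ) * (k / x) := by ring
            _ ≤ (n:ℝ) * m x := by
                refine mul_le_mul_of_nonneg_left ?_ (Nat.cast_nonneg n)
                rw [div_le_iff₀ hxpos]; linarith
        simp only [hf]; linarith
      have l2 : ∫ x in Set.Ioc X (n:ℝ), f n x ≤ ∫ x in Set.Ioi 1, f n x := by
        refine setIntegral_mono_set (hint n) ?_ (HasSubset.Subset.eventuallyLE hsub2)
        rw [EventuallyLE, ae_restrict_iff' measurableSet_Ioi]
        exact ae_of_all _ (fun x hx => hf0 n x (le_of_lt hx))
      have l3 : ∫ x in Set.Ioc X (n:ℝ), (k * n * (1/x) - 1)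
          = k * n * (Real.log n - Real.log X) - ((n:ℝ) - X) := by
        have hone : IntegrableOn (fun _ : ℝ => (1:ℝ)) (Set.Ioc X (n:ℝ)) volume :=
          integrableOn_const measure_Ioc_lt_top.ne
        have h : ∫ x in Set.Ioc X (n:ℝ), (k * n * (1/x) - 1)
            = (∫ x in Set.Ioc X (n:ℝ), k * n * (1/x)) - ∫ x in Set.Ioc X (n:ℝ), (1:ℝ) :=
          integral_sub (hgcont' (k * n)) hone
        rw [h, hlogint (k * n) n hXn, setIntegral_const, measureReal_def, Real.volume_Ioc,
          ENNReal.toReal_ofReal (by linarith)]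
        simp
      calc k * (n:ℝ) * (Real.log n - Real.log X) - (n:ℝ)
          ≤ k * (n:ℝ) * (Real.log n - Real.log X) - ((n:ℝ) - X) := by linarith
        _ = ∫ x in Set.Ioc X (n:ℝ), (k * n * (1/x) - 1) := l3.symm
        _ ≤ ∫ x in Set.Ioc X (n:ℝ), f n x := l1
        _ ≤ _ := l2
    · -- upper bound
      have hsplit : ∫ x in Set.Ioi 1, f n x =
          (∫ x in Set.Ioc 1 X, f n x) + ((∫ x in Set.Ioc X (n:ℝ), f n x)
            + ∫ x in Set.Ioi (n:ℝ), f n x) := by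
        rw [← Set.Ioc_union_Ioi_eq_Ioi hX1,
          setIntegral_union (Set.Ioc_disjoint_Ioi le_rfl) measurableSet_Ioi int1 int23,
          ← Set.Ioc_union_Ioi_eq_Ioi hXn,
          setIntegral_union (Set.Ioc_disjoint_Ioi le_rfl) measurableSet_Ioi int2 int3]
      have u1 : ∫ x in Set.Ioc 1 X, f n x ≤ (X - 1) * n := by
        have hconst : IntegrableOn (fun _ : ℝ => (n:ℝ)) (Set.Ioc 1 X) volume :=
          integrableOn_const measure_Ioc_lt_top.ne
        have h : ∫ x in Set.Ioc 1 X, f n x ≤ ∫ _ in Set.Ioc 1 X, (n:ℝ) := by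
          refine setIntegral_mono_on int1 hconst measurableSet_Ioc ?_
          intro x hx
          have hx1 : 1 ≤ x := hx.1.le
          calc f n x ≤ n * m x := hfli n x hx1
            _ ≤ n * 1 := mul_le_mul_of_nonneg_left (hm1 x hx1) (Nat.cast_nonneg n)
            _ = n := mul_one _
        rw [setIntegral_const, measureReal_def, Real.volume_Ioc, ENNReal.toReal_ofReal (by linarith),
          smul_eq_mul] at h
        exact h
      have u2 : ∫ x in Set.Ioc X (n:ℝ), f n x ≤ K * n * (Real.log n - Real.log X) := by
        have h : ∫ x in Set.Ioc X (n:ℝ), f n x ≤ ∫ x in Set.Ioc X (n:ℝ), (K * n * (1/x)) := by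
          refine setIntegral_mono_on int2 (hgcont' (K * n)) measurableSet_Ioc ?_
          intro x hx
          have hxX : X ≤ x := hx.1.le
          have hx1 : 1 ≤ x := by linarith
          have hxpos : 0 < x := by linarith
          have hmk := (hmX x hxX).2
          have h2 : (n:ℝ) * m x ≤ K * n * (1/x) := by
            calc (n:ℝ) * m x ≤ (n:ℝ) * (K / x) :=
                mul_le_mul_of_nonneg_left hmk (Nat.cast_nonneg n)
              _ = K * n * (1/x) := by ring
          exact le_trans (hfli n x hx1) h2
        rw [hlogint (K * n) n hXn] at h
        linarith
      have u3 : ∫ x in Set.Ioi (n:ℝ), f n x ≤ n * K^2 / 2 := by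
        have hg : IntegrableOn (fun x : ℝ => ((n:ℝ)^2 * K^2 / 2) * x ^ (-2:ℝ))
            (Set.Ioi (n:ℝ)) :=
          (integrableOn_Ioi_rpow_of_lt (by norm_num) hnpos).const_mul _
        have h : ∫ x in Set.Ioi (n:ℝ), f n x
            ≤ ∫ x in Set.Ioi (n:ℝ), ((n:ℝ)^2 * K^2 / 2) * x ^ (-2:ℝ) := by
          refine setIntegral_mono_on int3 hg measurableSet_Ioi ?_
          intro x hx
          have hxn : (n:ℝ) ≤ x := (Set.mem_Ioi.mp hx).le
          have hxX : X ≤ x := by linarith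
          have hx1 : 1 ≤ x := by linarith
          have hxpos : 0 < x := by linarith
          have hmK := (hmX x hxX).2
          show f n x ≤ (n:ℝ)^2 * K^2 / 2 * x ^ (-2:ℝ)
          rw [hrpow x hxpos]
          have hm2 : (m x)^2 ≤ K^2 * (x^2)⁻¹ := by
            rw [pow_two]
            calc m x * m x ≤ (K / x) * (K / x) := mul_self_le_mul_self (hm0 x hx1) hmK
              _ = K^2 * (x^2)⁻¹ := by field_simp
          calc f n x ≤ (n:ℝ)^2 * (m x)^2 / 2 := hfsq n x hx1
            _ ≤ (n:ℝ)^2 * (K^2 * (x^2)⁻¹) / 2 := by nlinarith [sq_nonneg (n:ℝ)]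
            _ = (n:ℝ)^2 * K^2 / 2 * (x^2)⁻¹ := by ring
        rw [integral_const_mul, integral_Ioi_rpow_of_lt (by norm_num) hnpos] at h
        have hval : ((n:ℝ)^2 * K^2 / 2) * (-(n:ℝ) ^ ((-2:ℝ) + 1) / ((-2:ℝ) + 1))
            = n * K^2 / 2 := by
          norm_num
          rw [Real.rpow_neg_one]
          field_simp
        rw [hval] at h
        exact h
      rw [hsplit]
      exact le_trans (add_le_add u1 (add_le_add u2 u3)) (le_of_eq (by ring))
  -- limit bounds
  have hlogtop : Tendsto (fun n : ℕ => Real.log n) atTop atTop :=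
    Real.tendsto_log_atTop.comp tendsto_natCast_atTop_atTop
  have ht0 : Tendsto (fun n : ℕ => (Real.log n)⁻¹) atTop (𝓝 0) := hlogtop.inv_tendsto_atTop
  have h1t : Tendsto (fun n : ℕ => 1 - Real.log X * (Real.log n)⁻¹) atTop (𝓝 1) := by
    have h := (ht0.const_mul (Real.log X)).const_sub (1:ℝ)
    simpa using h
  set ab : ℕ → ℝ := fun n => k * (1 - Real.log X * (Real.log n)⁻¹) - (Real.log n)⁻¹ with habd
  set bb : ℕ → ℝ := fun n =>
    K * (1 - Real.log X * (Real.log n)⁻¹) + (X - 1 + K^2/2) * (Real.log n)⁻¹ with hbbd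
  have hta : Tendsto ab atTop (𝓝 k) := by
    have := (h1t.const_mul k).sub ht0
    simpa using this
  have htb : Tendsto bb atTop (𝓝 K) := by
    have := (h1t.const_mul K).add (ht0.const_mul (X - 1 + K^2/2))
    simpa using this
  have eva : ∀ᶠ n in atTop, L - ε < ab n :=
    hta.eventually (eventually_gt_nhds (by simp only [hkdef]; linarith))
  have evb : ∀ᶠ n in atTop, bb n < L + ε :=
    htb.eventually (eventually_lt_nhds (by simp only [hKdef]; linarith))
  have evN : ∀ᶠ n : ℕ in atTop, X + 1 ≤ (n:ℝ) := by
    obtain ⟨N, hN⟩ := exists_nat_ge (X + 1)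
    exact eventually_atTop.mpr ⟨N, fun n hn => le_trans hN (Nat.cast_le.mpr hn)⟩
  filter_upwards [eva, evb, evN] with n ha hb hn
  show dist (1 / ((n : ℝ) * Real.log n) * ∫ x in Set.Ioi (1:ℝ), f n x) L < ε
  have hXn : X ≤ (n:ℝ) := by linarith
  have hn1 : (1:ℝ) < n := by linarith
  have hnpos : (0:ℝ) < n := by linarith
  have hlogn : 0 < Real.log n := Real.log_pos hn1
  have hD : 0 < (n:ℝ) * Real.log n := mul_pos hnpos hlogn
  obtain ⟨hlo, hhi⟩ := key n hn
  have e1 : ab n * ((n:ℝ) * Real.log n) = k * n * (Real.log n - Real.log X) - n := by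
    simp only [habd]
    field_simp
  have e2 : bb n * ((n:ℝ) * Real.log n)
      = (X - 1) * n + K * n * (Real.log n - Real.log X) + n * K^2 / 2 := by
    simp only [hbbd]
    field_simp
    ring
  have hrw : 1 / ((n:ℝ) * Real.log n) * (∫ x in Set.Ioi (1:ℝ), f n x)
      = (∫ x in Set.Ioi (1:ℝ), f n x) / ((n:ℝ) * Real.log n) := by ring
  have hlo' : ab n ≤ 1 / ((n:ℝ) * Real.log n) * ∫ x in Set.Ioi (1:ℝ), f n x := by
    rw [hrw, le_div_iff₀ hD, e1]; linarith
  have hhi' : 1 / ((n:ℝ) * Real.log n) * (∫ x in Set.Ioi (1:ℝ), f n x) ≤ bb n := by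
    rw [hrw, div_le_iff₀ hD, e2]; linarith
  rw [Real.dist_eq, abs_lt]
  have h1 : L - ε < 1 / ((n:ℝ) * Real.log n) * ∫ x in Set.Ioi (1:ℝ), f n x :=
    lt_of_lt_of_le ha hlo'
  have h2 : 1 / ((n:ℝ) * Real.log n) * (∫ x in Set.Ioi (1:ℝ), f n x) < L + ε :=
    lt_of_le_of_lt hhi' hb
  constructor
  · simpa using sub_lt_sub_right h1 L
  · simpa using sub_lt_sub_right h2 L
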